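/- arXiv:0807.1704 — 4 statements merged into one kernel-verified Lean document; each statement's English description precedes it below -/
import Mathlib

section
/- For any concrete site D, the presheaf Ω defined by Ω(D) = the set of all functions hom(1,D) → {0,1}, with Ω(f) given by precomposition with the underlying function of f, is a concrete sheaf on D. -/
open CategoryTheory CategoryTheory.Limits Opposite

universe u

/-- A concrete site: a subcanonical site with a terminal object such that `hom(1,-)` is
faithful and covering families are jointly surjective on points. -/
structure ConcreteSite : Type (u + 1) where
  C : Type u
  [cat : Category.{u} C]
  J : Coverage C
  term : C
  isTerminal : IsTerminal term
  subcanonical : ∀ X : C, Presieve.IsSheaf J.toGrothendieck (yoneda.obj X)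
  pointsFaithful : ∀ {A B : C} (f g : A ⟶ B), (∀ p : term ⟶ A, p ≫ f = p ≫ g) → f = g
  jointlySurjective : ∀ {X : C} {R : Presieve X}, R ∈ J.coverings X →
    ∀ p : term ⟶ X, ∃ (Y : C) (f : Y ⟶ X) (q : term ⟶ Y), R f ∧ q ≫ f = p

attribute [instance] ConcreteSite.cat

variable (S : ConcreteSite.{u})

/-- The underlying function of a plot. -/
def uFn (X : S.Cᵒᵖ ⥤ Type u) {D : S.C} (φ : X.obj (op D)) :
    (S.term ⟶ D) → X.obj (op S.term) :=
  fun d => X.map d.op φ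

/-- A presheaf is concrete if plots are determined by their underlying functions. -/
def IsConcrete (X : S.Cᵒᵖ ⥤ Type u) : Prop :=
  ∀ D : S.C, Function.Injective (fun φ : X.obj (op D) => uFn S X φ)

def IsConcSheaf (X : S.Cᵒᵖ ⥤ Type u) : Prop :=
  Presieve.IsSheaf S.J.toGrothendieck X ∧ IsConcrete S X

/-- The category of concrete sheaves on a concrete site, a full subcategory of presheaves. -/
abbrev ConcSheaf := ObjectProperty.FullSubcategory (IsConcSheaf S)

/-- The forgetful functor to presheaves. -/
abbrev toPre : ConcSheaf S ⥤ (S.Cᵒᵖ ⥤ Type u) := ObjectProperty.ι _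

/-- The underlying-set functor, sending a concrete sheaf `X` to `X(1)`. -/
abbrev uSet : ConcSheaf S ⥤ Type u := toPre S ⋙ (evaluation _ _).obj (op S.term)

/-- The presheaf Ω whose plots at D are arbitrary functions from the points of D to {0,1}. -/
def Omega (S : ConcreteSite.{u}) : S.Cᵒᵖ ⥤ Type u where
  obj D := (S.term ⟶ D.unop) → ULift.{u} Bool
  map f := TypeCat.ofHom (fun φ => fun d => φ (d ≫ f.unop))

/-- Ω is a concrete sheaf on any concrete site. -/
theorem statement6 (S : ConcreteSite.{u}) : IsConcSheaf S (Omega S) := by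
  constructor
  · rw [Presieve.isSheaf_coverage]
    intro D R hR x hx
    choose Y f q hRf hq using S.jointlySurjective hR
    refine ⟨fun p => x (f p) (hRf p) (q p), ?_, ?_⟩
    · intro Z g hg
      funext d
      have h1 := hx (q (d ≫ g)) d (hRf (d ≫ g)) hg (by rw [hq])
      have h2 := congrFun h1 (𝟙 S.term)
      change x _ _ (q (d ≫ g)) = x g hg d
      simpa using (show x _ _ (𝟙 S.term ≫ q (d ≫ g)) = x g hg (𝟙 S.term ≫ d) from h2)
    · intro φ hφ
      funext p
      have h3 := congrFun (hφ (f p) (hRf p)) (q p)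
      conv_lhs => rw [← hq p]
      exact h3
  · intro D φ ψ h
    funext p
    have := congrFun (congrFun h p) (𝟙 S.term)
    simpa using (show φ (𝟙 S.term ≫ p) = ψ (𝟙 S.term ≫ p) from this)
end

section
/- For any concrete site D, a morphism f : X → Y of concrete sheaves on D is a monomorphism if and only if its underlying function f₁ : X(1) → Y(1) is injective. -/
open CategoryTheory CategoryTheory.Limits Opposite

universe u

variable (S : ConcreteSite.{u})

def termSheaf (S : ConcreteSite.{u}) : ConcSheaf S :=
  ⟨yoneda.obj S.term, S.subcanonical S.term, fun _ φ ψ _ =>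
    S.pointsFaithful φ ψ (fun _ => S.isTerminal.hom_ext _ _)⟩

/-- a morphism of concrete sheaves is a monomorphism iff its underlying
function is injective. -/
theorem statement7 (S : ConcreteSite.{u}) {X Y : ConcSheaf S} (f : X ⟶ Y) :
    Mono f ↔ Function.Injective ((uSet S).map f) := by
  constructor
  · intro hm a b hab
    let ga : yoneda.obj S.term ⟶ X.obj := yonedaEquiv.symm a
    let gb : yoneda.obj S.term ⟶ X.obj := yonedaEquiv.symm b
    let ga' : termSheaf S ⟶ X := ObjectProperty.homMk ga
    let gb' : termSheaf S ⟶ X := ObjectProperty.homMk gb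
    have h : ga' ≫ f = gb' ≫ f := by
      apply ObjectProperty.hom_ext
      show ga ≫ f.hom = gb ≫ f.hom
      apply yonedaEquiv.injective
      rw [yonedaEquiv_comp, yonedaEquiv_comp]
      simp only [ga, gb, Equiv.apply_symm_apply]
      exact hab
    have h2 := (cancel_mono f).mp h
    have h3 : yonedaEquiv ga = yonedaEquiv gb := by
      have : ga = gb := congrArg (fun t => t.hom) h2
      rw [this]
    simpa [ga, gb] using h3
  · intro hinj
    constructor
    intro Z g h hgh
    have : ∀ D, g.hom.app D = h.hom.app D := by
      intro D
      ext φ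
      apply X.2.2
      funext d
      have nat : ∀ (k : Z ⟶ X) (d : S.term ⟶ D.unop),
          (X.1.map d.op) (k.hom.app D φ) = k.hom.app (op S.term) (Z.1.map d.op φ) :=
        fun k d => (FunctorToTypes.naturality k.hom d.op φ).symm
      show (X.1.map d.op) (g.hom.app D φ) = (X.1.map d.op) (h.hom.app D φ)
      rw [nat g d, nat h d]
      apply hinj
      exact congrArg (fun (t : Z ⟶ Y) => t.hom.app (op S.term) (Z.1.map d.op φ)) hgh
    exact ObjectProperty.hom_ext _ (NatTrans.ext (funext this))
end

section
/- For any concrete site D, a morphism i : A → X of concrete sheaves is a strong monomorphism if and only if it exhibits A as a subspace of X, meaning: for every plot φ ∈ X(D) whose underlying function has image contained in the image of the underlying function of i, there exists a unique plot ψ ∈ A(D) with i_D(ψ) = φ. -/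
open CategoryTheory CategoryTheory.Limits Opposite

universe u

variable (S : ConcreteSite.{u})

/-- `i : A ⟶ X` exhibits `A` as a subspace of `X`: every plot of `X` whose underlying
function takes values in the image of `i` lifts uniquely to a plot of `A`. -/
def IsSubspace (S : ConcreteSite.{u}) {A X : ConcSheaf S} (i : A ⟶ X) : Prop :=
  ∀ (D : S.C) (φ : X.obj.obj (op D)),
    Set.range (uFn S X.obj φ) ⊆ Set.range ((uSet S).map i) →
      ∃! ψ : A.obj.obj (op D), ((toPre S).map i).app (op D) ψ = φ


namespace St9

variable {S : ConcreteSite.{u}}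

/-- The yoneda embedding of an object `D` is a concrete sheaf. -/
def yD (S : ConcreteSite.{u}) (D : S.C) : ConcSheaf S :=
  ⟨yoneda.obj D, S.subcanonical D, by
    intro D' f g h
    exact S.pointsFaithful f g fun p => congrFun h p⟩

/-- The morphism `yD D ⟶ A` associated to a plot `ψ ∈ A(D)`. -/
def plotHom {A : ConcSheaf S} {D : S.C} (ψ : A.obj.obj (op D)) : yD S D ⟶ A where
  hom.app c := TypeCat.ofHom fun h => A.obj.map h.op ψ
  hom.naturality c c' u := by
    apply ConcreteCategory.hom_ext; intro (h : c.unop ⟶ D)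
    show A.obj.map (u.unop ≫ h).op ψ = A.obj.map u (A.obj.map h.op ψ)
    rw [op_comp, Quiver.Hom.op_unop, FunctorToTypes.map_comp_apply]

lemma inj_of_mono {A X : ConcSheaf S} (i : A ⟶ X) (hm : Mono i) (D : S.C) :
    Function.Injective (i.hom.app (op D)) := by
  intro ψ₁ ψ₂ h
  have : plotHom ψ₁ ≫ i = plotHom ψ₂ ≫ i := by
    apply ObjectProperty.hom_ext; apply NatTrans.ext
    funext c; apply ConcreteCategory.hom_ext; intro (f : c.unop ⟶ D)
    show i.hom.app c (A.obj.map f.op ψ₁) = i.hom.app c (A.obj.map f.op ψ₂)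
    have n1 := ConcreteCategory.congr_hom (i.hom.naturality f.op) ψ₁
    have n2 := ConcreteCategory.congr_hom (i.hom.naturality f.op) ψ₂
    simp only [types_comp_apply] at n1 n2
    show i.hom.app (op c.unop) _ = i.hom.app (op c.unop) _
    rw [n1, n2, h]
  have := (cancel_mono i).1 this
  have h2 := ConcreteCategory.congr_hom (congrArg (fun t => NatTrans.app t.hom (op D)) this) (𝟙 D)
  show ψ₁ = ψ₂
  have e1 : (plotHom ψ₁).hom.app (op D) (𝟙 D) = ψ₁ := by
    show A.obj.map (𝟙 D).op ψ₁ = ψ₁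
    simp
  have e2 : (plotHom ψ₂).hom.app (op D) (𝟙 D) = ψ₂ := by
    show A.obj.map (𝟙 D).op ψ₂ = ψ₂
    simp
  rw [← e1, ← e2]
  exact h2

/-- The indiscrete concrete sheaf on truth values. -/
def K (S : ConcreteSite.{u}) : S.Cᵒᵖ ⥤ Type u where
  obj c := (S.term ⟶ c.unop) → ULift.{u} Prop
  map u := TypeCat.ofHom fun f => fun d => f (d ≫ u.unop)
  map_id c := by apply ConcreteCategory.hom_ext; intro f; funext d; simp
  map_comp u v := by apply ConcreteCategory.hom_ext; intro f; funext d; dsimp; rw [Category.assoc]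

lemma K_isConcSheaf : IsConcSheaf S (K S) := by
  constructor
  · rw [Presieve.isSheaf_coverage]
    intro D R hR x hx
    have key : ∀ {Y Y' : S.C} (f : Y ⟶ D) (f' : Y' ⟶ D) (hf : R f) (hf' : R f')
        (q : S.term ⟶ Y) (q' : S.term ⟶ Y'), q ≫ f = q' ≫ f' →
        x f hf q = x f' hf' q' := by
      intro Y Y' f f' hf hf' q q' hqq
      have h2 : x f hf (𝟙 S.term ≫ q) = x f' hf' (𝟙 S.term ≫ q') :=
        congrFun (hx q q' hf hf' hqq) (𝟙 S.term)
      simpa using h2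
    choose Y F Q hRF hQF using fun d : S.term ⟶ D => S.jointlySurjective hR d
    refine ⟨fun d => x (F d) (hRF d) (Q d), ?_, ?_⟩
    · intro Z f hf
      funext q
      show x (F (q ≫ f)) (hRF _) (Q (q ≫ f)) = x f hf q
      exact key _ _ _ _ _ _ (hQF (q ≫ f))
    · intro t ht
      funext d
      have h3 : t (Q d ≫ F d) = x (F d) (hRF d) (Q d) := congrFun (ht (F d) (hRF d)) (Q d)
      calc t d = t (Q d ≫ F d) := by rw [hQF d]
        _ = x (F d) (hRF d) (Q d) := h3
  · intro D f g h
    funext d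
    have h2 : f (𝟙 S.term ≫ d) = g (𝟙 S.term ≫ d) := congrFun (congrFun h d) (𝟙 S.term)
    simpa using h2

lemma epi_surj {E B : ConcSheaf S} (p : E ⟶ B) (hp : Epi p) :
    Function.Surjective (p.hom.app (op S.term)) := by
  intro b
  by_contra hb
  push_neg at hb
  let KS : ConcSheaf S := ⟨K S, K_isConcSheaf⟩
  let χ₁ : B ⟶ KS := ObjectProperty.homMk
    { app := fun c => TypeCat.ofHom fun β d => ULift.up (∃ e, p.hom.app (op S.term) e = B.obj.map d.op β)
      naturality := by
        intro c c' u
        apply ConcreteCategory.hom_ext; intro β; funext d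
        have hmap : B.obj.map d.op (B.obj.map u β) = B.obj.map (d ≫ u.unop).op β := by
          rw [← FunctorToTypes.map_comp_apply]
          congr 1
        show ULift.up _ = ULift.up _
        exact congrArg (fun y => ULift.up (∃ e, p.hom.app (op S.term) e = y)) hmap }
  let χ₂ : B ⟶ KS := ObjectProperty.homMk
    { app := fun c => TypeCat.ofHom fun β d => ULift.up True
      naturality := by intros; rfl }
  have hcomp : p ≫ χ₁ = p ≫ χ₂ := by
    apply ObjectProperty.hom_ext; apply NatTrans.ext
    funext c; apply ConcreteCategory.hom_ext; intro ε
    funext d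
    show ULift.up _ = ULift.up True
    have hnat : (E.obj.map d.op ≫ p.hom.app (op S.term)) ε = (p.hom.app c ≫ B.obj.map d.op) ε :=
      ConcreteCategory.congr_hom (p.hom.naturality d.op) ε
    exact congrArg ULift.up (eq_true ⟨E.obj.map d.op ε, hnat⟩)
  have hχ := (cancel_epi p).1 hcomp
  have h2 := congrFun (ConcreteCategory.congr_hom (congrArg (fun t => NatTrans.app t.hom (op S.term)) hχ) b) (𝟙 S.term)
  obtain ⟨e, he⟩ := of_eq_true (congrArg ULift.down h2)
  exact hb e (by simpa using he)

/-- The subpresheaf of plots whose underlying points lie in `σ`. -/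
def subPre (X : ConcSheaf S) (σ : Set (X.obj.obj (op S.term))) : S.Cᵒᵖ ⥤ Type u where
  obj c := {φ : X.obj.obj c // ∀ d : S.term ⟶ c.unop, X.obj.map d.op φ ∈ σ}
  map u := TypeCat.ofHom fun φ => ⟨X.obj.map u φ.1, fun d => by
    have h := φ.2 (d ≫ u.unop)
    rw [← FunctorToTypes.map_comp_apply]
    convert h using 2; rfl⟩
  map_id c := by
    apply ConcreteCategory.hom_ext; intro φ
    apply Subtype.ext
    show X.obj.map (𝟙 c) φ.1 = φ.1
    simp
  map_comp u v := by
    apply ConcreteCategory.hom_ext; intro φ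
    apply Subtype.ext
    show X.obj.map (u ≫ v) φ.1 = X.obj.map v (X.obj.map u φ.1)
    rw [FunctorToTypes.map_comp_apply]

lemma subPre_isConcSheaf (X : ConcSheaf S) (σ : Set (X.obj.obj (op S.term))) :
    IsConcSheaf S (subPre X σ) := by
  constructor
  · rw [Presieve.isSheaf_coverage]
    intro D R hR x hx
    have hX : Presieve.IsSheafFor X.obj R :=
      ((Presieve.isSheaf_coverage S.J X.obj).1 X.2.1) R hR
    let x' : Presieve.FamilyOfElements X.obj R := fun Y f hf => (x f hf).1
    have hx'c : x'.Compatible := by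
      intro Y₁ Y₂ Z g₁ g₂ f₁ f₂ h₁ h₂ hc
      exact congrArg Subtype.val (hx g₁ g₂ h₁ h₂ hc)
    obtain ⟨t, ht, htu⟩ := hX x' hx'c
    have hmem : ∀ d : S.term ⟶ D, X.obj.map d.op t ∈ σ := by
      intro d
      obtain ⟨Y, f, q, hf, hqf⟩ := S.jointlySurjective hR d
      have h1 : X.obj.map d.op t = X.obj.map q.op (X.obj.map f.op t) := by
        rw [← FunctorToTypes.map_comp_apply, ← op_comp, hqf]
      rw [h1, ht f hf]
      exact (x f hf).2 q
    refine ⟨⟨t, hmem⟩, ?_, ?_⟩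
    · intro Y f hf
      exact Subtype.ext (ht f hf)
    · intro t' ht'
      exact Subtype.ext (htu t'.1 fun Y f hf => congrArg Subtype.val (ht' f hf))
  · intro D φ₁ φ₂ h
    apply Subtype.ext
    apply X.2.2 D
    funext d
    exact congrArg Subtype.val (congrFun h d)

theorem main {A X : ConcSheaf S} (i : A ⟶ X) : StrongMono i ↔ IsSubspace S i := by
  constructor
  · -- StrongMono → IsSubspace
    intro hsm D φ hφ
    let σ : Set (X.obj.obj (op S.term)) := Set.range ((uSet S).map i)
    let B : ConcSheaf S := ⟨subPre X σ, subPre_isConcSheaf X σ⟩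
    let j : B ⟶ X := ObjectProperty.homMk { app := fun c => TypeCat.ofHom fun φ' => φ'.1, naturality := fun _ _ _ => rfl }
    let i' : A ⟶ B := ObjectProperty.homMk
      { app := fun c => TypeCat.ofHom fun ψ =>
          ⟨i.hom.app c ψ, fun d => ⟨A.obj.map d.op ψ, ConcreteCategory.congr_hom (i.hom.naturality d.op) ψ⟩⟩
        naturality := by
          intro c c' u
          apply ConcreteCategory.hom_ext; intro ψ
          have := ConcreteCategory.congr_hom (i.hom.naturality u) ψ; exact Subtype.ext this }
    have hepi : Epi i' := by
      constructor
      intro C u v huv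
      apply ObjectProperty.hom_ext; apply NatTrans.ext
      funext c; apply ConcreteCategory.hom_ext; intro β
      apply C.2.2 c.unop
      funext d
      obtain ⟨a, ha⟩ := β.2 d
      have hel : B.obj.map d.op β = i'.hom.app (op S.term) a := Subtype.ext ha.symm
      show C.obj.map d.op (u.hom.app c β) = C.obj.map d.op (v.hom.app c β)
      calc C.obj.map d.op (u.hom.app c β)
          = u.hom.app (op S.term) (B.obj.map d.op β) := (ConcreteCategory.congr_hom (u.hom.naturality d.op) β).symm
        _ = (i' ≫ u).hom.app (op S.term) a := by rw [hel]; rfl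
        _ = (i' ≫ v).hom.app (op S.term) a := by rw [huv]
        _ = v.hom.app (op S.term) (B.obj.map d.op β) := by rw [hel]; rfl
        _ = C.obj.map d.op (v.hom.app c β) := ConcreteCategory.congr_hom (v.hom.naturality d.op) β
    have hsq : CommSq (𝟙 A) i' i j := ⟨by simp only [Category.id_comp]; rfl⟩
    haveI := hepi
    obtain ⟨l, hl1, hl2⟩ := ((hsm.rlp i').sq_hasLift hsq).exists_lift.some
    refine ⟨l.hom.app (op D) ⟨φ, fun d => hφ ⟨d, rfl⟩⟩, ?_, ?_⟩
    · show i.hom.app (op D) _ = φ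
      have := ConcreteCategory.congr_hom (congrArg (fun t => NatTrans.app t.hom (op D)) hl2) ⟨φ, fun d => hφ ⟨d, rfl⟩⟩
      exact this
    · intro y hy
      apply inj_of_mono i hsm.mono D
      have : i.hom.app (op D) (l.hom.app (op D) ⟨φ, fun d => hφ ⟨d, rfl⟩⟩) = φ :=
        ConcreteCategory.congr_hom (congrArg (fun t => NatTrans.app t.hom (op D)) hl2) ⟨φ, fun d => hφ ⟨d, rfl⟩⟩
      exact hy.trans this.symm
  · -- IsSubspace → StrongMono
    intro hs
    have hinj : ∀ D : S.C, Function.Injective (i.hom.app (op D)) := by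
      intro D ψ₁ ψ₂ h
      have hr : Set.range (uFn S X.obj (i.hom.app (op D) ψ₁)) ⊆ Set.range ((uSet S).map i) := by
        rintro _ ⟨d, rfl⟩
        exact ⟨A.obj.map d.op ψ₁, ConcreteCategory.congr_hom (i.hom.naturality d.op) ψ₁⟩
      obtain ⟨ψ, hψ, hu⟩ := hs D (i.hom.app (op D) ψ₁) hr
      exact (hu ψ₁ rfl).trans (hu ψ₂ h.symm).symm
    constructor
    · constructor
      intro Z f g hfg
      apply ObjectProperty.hom_ext; apply NatTrans.ext
      funext c; apply ConcreteCategory.hom_ext; intro ψ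
      exact hinj c.unop (ConcreteCategory.congr_hom (congrArg (fun t => NatTrans.app t.hom c) hfg) ψ)
    · intro E B p hp
      constructor
      intro f g sq
      have hsur := epi_surj p hp
      have hch : ∀ (c : S.Cᵒᵖ) (β : B.obj.obj c), ∃! ψ : A.obj.obj c, i.hom.app c ψ = g.hom.app c β := by
        intro c β
        apply hs c.unop (g.hom.app c β)
        rintro _ ⟨d, rfl⟩
        obtain ⟨e, he⟩ := hsur (B.obj.map d.op β)
        refine ⟨f.hom.app (op S.term) e, ?_⟩
        show i.hom.app (op S.term) (f.hom.app (op S.term) e) = X.obj.map d.op (g.hom.app c β)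
        calc i.hom.app (op S.term) (f.hom.app (op S.term) e)
            = (f ≫ i).hom.app (op S.term) e := rfl
          _ = (p ≫ g).hom.app (op S.term) e := by rw [sq.w]
          _ = g.hom.app (op S.term) (B.obj.map d.op β) := by
              show g.hom.app (op S.term) (p.hom.app (op S.term) e) = _
              rw [he]
          _ = X.obj.map d.op (g.hom.app c β) := ConcreteCategory.congr_hom (g.hom.naturality d.op) β
      choose l hl hlu using hch
      let t : NatTrans B.obj A.obj :=
        { app := fun c => TypeCat.ofHom (l c)
          naturality := by
            intro c c' u
            apply ConcreteCategory.hom_ext; intro β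
            apply hinj c'.unop
            show i.hom.app c' (l c' (B.obj.map u β)) = i.hom.app c' (A.obj.map u (l c β))
            rw [hl c' (B.obj.map u β)]
            calc g.hom.app c' (B.obj.map u β)
                = X.obj.map u (g.hom.app c β) := ConcreteCategory.congr_hom (g.hom.naturality u) β
              _ = X.obj.map u (i.hom.app c (l c β)) := by rw [hl c β]
              _ = i.hom.app c' (A.obj.map u (l c β)) := (ConcreteCategory.congr_hom (i.hom.naturality u) (l c β)).symm }
      refine ⟨⟨⟨ObjectProperty.homMk t, ?_, ?_⟩⟩⟩
      · apply ObjectProperty.hom_ext; apply NatTrans.ext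
        funext c; apply ConcreteCategory.hom_ext; intro ε
        apply hinj c.unop
        show i.hom.app c (l c (p.hom.app c ε)) = i.hom.app c (f.hom.app c ε)
        rw [hl c (p.hom.app c ε)]
        calc g.hom.app c (p.hom.app c ε) = (p ≫ g).hom.app c ε := rfl
          _ = (f ≫ i).hom.app c ε := by rw [sq.w]
          _ = i.hom.app c (f.hom.app c ε) := rfl
      · apply ObjectProperty.hom_ext; apply NatTrans.ext
        funext c; apply ConcreteCategory.hom_ext; intro β
        exact hl c β

end St9

/-- a morphism of concrete sheaves is a strong monomorphism iff it exhibits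
its source as a subspace of its target. -/
theorem statement9 (S : ConcreteSite.{u}) {A X : ConcSheaf S} (i : A ⟶ X) :
    StrongMono i ↔ IsSubspace S i := St9.main i
end

section
/- On a concrete site, applying Grothendieck's plus construction once to a concrete presheaf yields a concrete sheaf; hence the sheafification of a concrete presheaf is concrete. -/
open CategoryTheory CategoryTheory.Limits Opposite

universe u

variable (S : ConcreteSite.{u})

/-- The category of concrete presheaves on a concrete site. -/
abbrev ConcPre (S : ConcreteSite.{u}) := ObjectProperty.FullSubcategory (IsConcrete S)

-- Every point factors through a covering sieve.
lemma point_factor {X : S.C} {Sv : Sieve X}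
    (hS : Sv ∈ (Coverage.toGrothendieck S.J) X) (p : S.term ⟶ X) :
    ∃ (Y : S.C) (f : Y ⟶ X) (q : S.term ⟶ Y), Sv f ∧ q ≫ f = p := by
  induction hS with
  | of X R hR =>
    obtain ⟨Y, f, q, hf, hq⟩ := S.jointlySurjective hR p
    exact ⟨Y, f, q, ⟨Y, 𝟙 _, f, hf, by simp⟩, hq⟩
  | top X => exact ⟨X, 𝟙 X, p, trivial, by simp⟩
  | transitive X R Sv hR hSv ih ih2 =>
    obtain ⟨Y, f, q, hf, hq⟩ := ih p
    obtain ⟨Z, g, r, hg, hr⟩ := ih2 hf q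
    exact ⟨Z, g ≫ f, r, hg, by rw [← hq, ← hr]; simp⟩

-- A concrete presheaf is separated.
lemma conc_sep (X : S.Cᵒᵖ ⥤ Type u) (hX : IsConcrete S X) (D : S.C)
    (Sv : ((Coverage.toGrothendieck S.J)).Cover D) (x y : X.obj (op D))
    (h : ∀ I : Sv.Arrow, X.map I.f.op x = X.map I.f.op y) : x = y := by
  apply hX
  funext p
  obtain ⟨Y, f, q, hf, hq⟩ := point_factor S Sv.2 p
  have := congrArg (X.map q.op) (h ⟨Y, f, hf⟩)
  simp only [← FunctorToTypes.map_comp_apply, ← op_comp] at this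
  simpa [uFn, ← hq] using this

open GrothendieckTopology GrothendieckTopology.Plus

-- `toPlus` is injective for a concrete presheaf.
lemma toPlus_inj (X : S.Cᵒᵖ ⥤ Type u) (hX : IsConcrete S X) (D : S.C) :
    Function.Injective (((Coverage.toGrothendieck S.J).toPlus X).app (op D)) := by
  intro x y h
  obtain ⟨W, h1, h2, hh⟩ :=
    (eq_mk_iff_exists (Meq.mk (⊤ : (Coverage.toGrothendieck S.J).Cover D) x)
      (Meq.mk ⊤ y)).mp (by
        have ex := toPlus_eq_mk (J := Coverage.toGrothendieck S.J) (P := X) (X := D) x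
        have ey := toPlus_eq_mk (J := Coverage.toGrothendieck S.J) (P := X) (X := D) y
        exact (ex.symm.trans h).trans ey)
  apply conc_sep S X hX D W
  intro I
  exact congrFun (congrArg Subtype.val hh) I

lemma mk_refine (X : S.Cᵒᵖ ⥤ Type u) {D : S.C}
    {W T : (Coverage.toGrothendieck S.J).Cover D} (e : W ⟶ T) (s : Meq X T) :
    mk s = mk (s.refine e) := by
  rw [eq_mk_iff_exists]
  exact ⟨W, e, 𝟙 _, by ext I; rfl⟩

theorem statement15' (S : ConcreteSite.{u}) (X : S.Cᵒᵖ ⥤ Type u) (hX : IsConcrete S X) :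
    Presieve.IsSheaf (Coverage.toGrothendieck S.J)
      (GrothendieckTopology.plusObj (Coverage.toGrothendieck S.J) X)
    ∧ IsConcrete S (GrothendieckTopology.plusObj (Coverage.toGrothendieck S.J) X) := by
  set J := Coverage.toGrothendieck S.J with hJ
  constructor
  · rw [← isSheaf_iff_isSheaf_of_type]
    exact isSheaf_of_sep X (conc_sep S X hX)
  · intro D x y h
    simp only at h
    obtain ⟨Sx, sx, rfl⟩ := exists_rep (J := J) (P := X) x
    obtain ⟨Sy, sy, rfl⟩ := exists_rep (J := J) (P := X) y
    rw [mk_refine S X (homOfLE inf_le_left : Sx ⊓ Sy ⟶ Sx) sx,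
        mk_refine S X (homOfLE inf_le_right : Sx ⊓ Sy ⟶ Sy) sy]
    congr 1
    ext I
    apply hX
    funext q
    have key : ∀ (T : J.Cover D) (s : Meq X T) (hf : T I.f),
        (J.toPlus X).app (op S.term) (X.map q.op (s ⟨I.Y, I.f, hf⟩))
          = (J.plusObj X).map (q ≫ I.f).op (mk s) := by
      intro T s hf
      have h1 := toPlus_apply T s ⟨I.Y, I.f, hf⟩
      have h2 := FunctorToTypes.naturality (J.toPlus X) q.op (s ⟨I.Y, I.f, hf⟩)
      refine h2.trans ((congrArg ((J.plusObj X).map q.op) h1).trans ?_)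
      rw [op_comp, FunctorToTypes.map_comp_apply]
    have hx := key Sx sx I.hf.1
    have hy := key Sy sy I.hf.2
    have := congrFun h (q ≫ I.f)
    simp only [uFn] at this
    apply toPlus_inj S X hX S.term
    exact hx.trans (this.trans hy.symm)

/-- applying Grothendieck's plus construction once to a concrete presheaf
yields a concrete sheaf (so the sheafification of a concrete presheaf is concrete). -/
theorem statement15 (S : ConcreteSite.{u}) (X : ConcPre S) :
    IsConcSheaf S (GrothendieckTopology.plusObj (Coverage.toGrothendieck S.J) X.obj) := statement15' S X.obj X.property
end
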